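/- Let G be a finite connected non-bipartite vd-graph, and let a₀ be a positive integer. For vertices v, w of G let c(v,w) = |N(v) ∩ N(w)| denote the number of common neighbors of v and w. Suppose that c(v,w) = a₀ whenever v and w are adjacent, and c(v,w) ≠ a₀ whenever v and w are distinct and non-adjacent. Then Aut(G × K₂) ≅ Aut(G) × ℤ₂; that is, G is a stable graph. -/

import Mathlib

open SimpleGraph

/-- The bipartite double `B(G) = G × K₂` of a graph `G`: vertices are `V(G) × {0,1}`,
and `(x,a)` is adjacent to `(y,b)` iff `a ≠ b` and `x` is adjacent to `y` in `G`. -/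
def bipartiteDouble {V : Type*} (G : SimpleGraph V) : SimpleGraph (V × Bool) where
  Adj x y := x.2 ≠ y.2 ∧ G.Adj x.1 y.1
  symm := ⟨fun x y h => ⟨h.1.symm, h.2.symm⟩⟩
  loopless := ⟨fun x h => h.1 rfl⟩

lemma bd_adj {V : Type*} (G : SimpleGraph V) (x y : V × Bool) :
    (bipartiteDouble G).Adj x y ↔ x.2 ≠ y.2 ∧ G.Adj x.1 y.1 := Iff.rfl

lemma bd_common_same {V : Type*} (G : SimpleGraph V) (v w : V) (a : Bool) :
    (bipartiteDouble G).commonNeighbors (v,a) (w,a)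
      = (fun u => (u, !a)) '' (G.commonNeighbors v w) := by
  ext ⟨u, c⟩
  simp only [mem_commonNeighbors, bd_adj, Set.mem_image, Prod.mk.injEq]
  constructor
  · rintro ⟨⟨h1, h2⟩, ⟨h3, h4⟩⟩
    exact ⟨u, ⟨h2, h4⟩, rfl, by revert h1; cases a <;> cases c <;> simp⟩
  · rintro ⟨u', ⟨h2, h4⟩, rfl, rfl⟩
    exact ⟨⟨by cases a <;> simp, h2⟩, ⟨by cases a <;> simp, h4⟩⟩

lemma bd_common_cross {V : Type*} (G : SimpleGraph V) (v w : V) (a b : Bool) (hab : a ≠ b) :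
    (bipartiteDouble G).commonNeighbors (v,a) (w,b) = ∅ := by
  ext ⟨u, c⟩
  simp only [mem_commonNeighbors, bd_adj, Set.mem_empty_iff_false, iff_false]
  rintro ⟨⟨h1, -⟩, ⟨h3, -⟩⟩
  cases a <;> cases b <;> cases c <;> simp_all

lemma bd_card_iff {V : Type*} (G : SimpleGraph V) (a₀ : ℕ) (ha₀ : 0 < a₀)
    (hadj : ∀ v w : V, G.Adj v w → (G.commonNeighbors v w).ncard = a₀)
    (hnonadj : ∀ v w : V, v ≠ w → ¬ G.Adj v w → (G.commonNeighbors v w).ncard ≠ a₀)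
    (x y : V × Bool) (hxy : x ≠ y) :
    ((bipartiteDouble G).commonNeighbors x y).ncard = a₀ ↔ (x.2 = y.2 ∧ G.Adj x.1 y.1) := by
  obtain ⟨v, a⟩ := x
  obtain ⟨w, b⟩ := y
  by_cases hab : a = b
  · subst hab
    have hinj : Function.Injective (fun u : V => (u, !a)) := fun u u' h => congrArg Prod.fst h
    rw [bd_common_same, Set.ncard_image_of_injective _ hinj]
    constructor
    · intro h
      refine ⟨rfl, ?_⟩
      by_contra hnadj
      have hvw : v ≠ w := fun h' => hxy (by simp [h'])
      exact hnonadj v w hvw hnadj h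
    · rintro ⟨-, h⟩
      exact hadj v w h
  · rw [bd_common_cross G v w a b hab]
    simp only [Set.ncard_empty]
    constructor
    · intro h; exact absurd h.symm ha₀.ne'
    · rintro ⟨h, -⟩; exact absurd h hab

lemma iso_commonNeighbors {W : Type*} {H : SimpleGraph W} (e : H ≃g H) (x y : W) :
    H.commonNeighbors (e x) (e y) = e '' H.commonNeighbors x y := by
  ext u
  simp only [mem_commonNeighbors, Set.mem_image]
  constructor
  · rintro ⟨h1, h2⟩
    refine ⟨e.symm u, ⟨?_, ?_⟩, e.apply_symm_apply u⟩
    · rw [← e.apply_symm_apply u] at h1; exact e.map_rel_iff.mp h1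
    · rw [← e.apply_symm_apply u] at h2; exact e.map_rel_iff.mp h2
  · rintro ⟨z, ⟨h1, h2⟩, rfl⟩
    exact ⟨e.map_rel_iff.mpr h1, e.map_rel_iff.mpr h2⟩

theorem stmt_11 {V : Type*} [Fintype V] (G : SimpleGraph V)
    (hconn : G.Connected) (hnonbip : ¬ G.Colorable 2)
    (hvd : ∀ v w : V, G.neighborSet v = G.neighborSet w → v = w)
    (a₀ : ℕ) (ha₀ : 0 < a₀)
    (hadj : ∀ v w : V, G.Adj v w → (G.commonNeighbors v w).ncard = a₀)
    (hnonadj : ∀ v w : V, v ≠ w → ¬ G.Adj v w → (G.commonNeighbors v w).ncard ≠ a₀) :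
    Nonempty ((bipartiteDouble G ≃g bipartiteDouble G) ≃*
      (G ≃g G) × Multiplicative (ZMod 2)) := by
  classical
  -- key relation preservation
  have key : ∀ (e : bipartiteDouble G ≃g bipartiteDouble G) (x y : V × Bool),
      x.2 = y.2 → G.Adj x.1 y.1 → ((e x).2 = (e y).2 ∧ G.Adj (e x).1 (e y).1) := by
    intro e x y h2 hxyadj
    have hxy : x ≠ y := fun h => hxyadj.ne (congrArg Prod.fst h)
    have hcard : ((bipartiteDouble G).commonNeighbors x y).ncard = a₀ :=
      (bd_card_iff G a₀ ha₀ hadj hnonadj x y hxy).mpr ⟨h2, hxyadj⟩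
    have hcard' : ((bipartiteDouble G).commonNeighbors (e x) (e y)).ncard = a₀ := by
      rw [iso_commonNeighbors e x y, Set.ncard_image_of_injective _ e.injective]
      exact hcard
    exact (bd_card_iff G a₀ ha₀ hadj hnonadj (e x) (e y)
      (fun h => hxy (e.injective h))).mp hcard'
  have hV : Nonempty V := hconn.nonempty
  obtain ⟨v₀⟩ := hV
  -- G has an edge
  have hedge : ∃ x y : V, G.Adj x y := by
    by_contra h
    push_neg at h
    exact hnonbip ⟨SimpleGraph.Coloring.mk (fun _ => (0 : Fin 2))
      (fun {v w} hvw => absurd hvw (h v w))⟩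
  -- every vertex has a neighbor
  have hasNbr : ∀ v : V, ∃ w, G.Adj v w := by
    intro v
    obtain ⟨x, y, hxy⟩ := hedge
    by_cases hvx : v = x
    · exact ⟨y, hvx ▸ hxy⟩
    · obtain ⟨p⟩ := hconn.preconnected v x
      cases p with
      | nil => exact absurd rfl hvx
      | cons h _ => exact ⟨_, h⟩
  -- layer coherence
  have hsame : ∀ (e : bipartiteDouble G ≃g bipartiteDouble G) (a : Bool) (v w : V),
      (e (v,a)).2 = (e (w,a)).2 := by
    intro e a v w
    obtain ⟨p⟩ := hconn.preconnected v w
    induction p with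
    | nil => rfl
    | @cons u v' w' h q ih => exact ((key e (u, a) (v', a) rfl h).1).trans ih
  have hdiff : ∀ (e : bipartiteDouble G ≃g bipartiteDouble G) (v : V),
      (e (v,false)).2 ≠ (e (v,true)).2 := by
    intro e v
    obtain ⟨w, hw⟩ := hasNbr v
    have hBadj : (bipartiteDouble G).Adj (v,false) (w,true) := ⟨by simp, hw⟩
    have h2 := (e.map_rel_iff.mpr hBadj).1
    have h3 := hsame e true w v
    intro h
    exact h2 (h.trans h3.symm)
  -- the homomorphism
  let bOf : Multiplicative (ZMod 2) → Bool := fun z => decide (Multiplicative.toAdd z = 1)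
  have bOf_mul : ∀ z₁ z₂, bOf (z₁ * z₂) = xor (bOf z₁) (bOf z₂) := by decide
  have bOf_inj : ∀ z₁ z₂, bOf z₁ = bOf z₂ → z₁ = z₂ := by decide
  let Φ : (G ≃g G) × Multiplicative (ZMod 2) → (bipartiteDouble G ≃g bipartiteDouble G) :=
    fun p =>
      { toFun := fun x => (p.1 x.1, xor x.2 (bOf p.2))
        invFun := fun x => (p.1.symm x.1, xor x.2 (bOf p.2))
        left_inv := fun x => by
          obtain ⟨v, a⟩ := x
          simp only [RelIso.symm_apply_apply]
          cases a <;> cases hb : bOf p.2 <;> simp [hb]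
        right_inv := fun x => by
          obtain ⟨v, a⟩ := x
          simp only [RelIso.apply_symm_apply]
          cases a <;> cases hb : bOf p.2 <;> simp [hb]
        map_rel_iff' := by
          intro x y
          simp only [Equiv.coe_fn_mk, bd_adj]
          constructor
          · rintro ⟨h1, h2⟩
            refine ⟨?_, p.1.map_rel_iff.mp h2⟩
            intro h; exact h1 (by rw [h])
          · rintro ⟨h1, h2⟩
            refine ⟨?_, p.1.map_rel_iff.mpr h2⟩
            intro h
            apply h1
            revert h
            cases x.2 <;> cases y.2 <;> cases bOf p.2 <;> simp }
  have Φapp : ∀ p x, (Φ p) x = (p.1 x.1, xor x.2 (bOf p.2)) := fun p x => rfl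
  have hmul : ∀ p q, Φ (p * q) = Φ p * Φ q := by
    intro p q
    ext x
    · show ((p.1 * q.1) x.1, xor x.2 (bOf (p.2 * q.2))).1 = _
      rfl
    · show (((p.1 * q.1) x.1, xor x.2 (bOf (p.2 * q.2))).2 : Bool) = _
      show xor x.2 (bOf (p.2 * q.2)) = xor (xor x.2 (bOf q.2)) (bOf p.2)
      rw [bOf_mul]
      cases x.2 <;> cases bOf p.2 <;> cases bOf q.2 <;> rfl
  have hinj : Function.Injective Φ := by
    intro p q h
    have h' : ∀ x, Φ p x = Φ q x := fun x => by rw [h]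
    have h1 : ∀ v : V, p.1 v = q.1 v := by
      intro v
      have h3 := congrArg Prod.fst (h' (v, false))
      rw [Φapp, Φapp] at h3
      exact h3
    have h2 : bOf p.2 = bOf q.2 := by
      have h3 := congrArg Prod.snd (h' (v₀, false))
      rw [Φapp, Φapp] at h3
      simpa using h3
    have : p.1 = q.1 := by ext v; exact h1 v
    exact Prod.ext this (bOf_inj _ _ h2)
  have hsurj : Function.Surjective Φ := by
    intro e
    set ε : Bool := (e (v₀, false)).2 with hε
    have h0 : ∀ v, (e (v, false)).2 = ε := fun v => hsame e false v v₀
    have h1 : ∀ v, (e (v, true)).2 = !ε := by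
      intro v
      have hd := hdiff e v
      have h0v := h0 v
      revert hd
      rw [h0v]
      cases (e (v, true)).2 <;> cases ε <;> simp
    set σ : V → V := fun v => (e (v, false)).1 with hσdef
    set τ : V → V := fun v => (e (v, true)).1 with hτdef
    have he0 : ∀ v, e (v, false) = (σ v, ε) := fun v => Prod.ext rfl (h0 v)
    have he1 : ∀ v, e (v, true) = (τ v, !ε) := fun v => Prod.ext rfl (h1 v)
    -- σ preserves adjacency
    have hσadj : ∀ v w, G.Adj v w ↔ G.Adj (σ v) (σ w) := by
      intro v w
      constructor
      · intro h
        exact (key e (v, false) (w, false) rfl h).2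
      · intro h
        have h2 : ((e (v,false)).2 : Bool) = (e (w,false)).2 := (h0 v).trans (h0 w).symm
        have := key e.symm (e (v,false)) (e (w,false)) h2 h
        rw [e.symm_apply_apply, e.symm_apply_apply] at this
        exact this.2
    -- cross adjacency
    have hcross : ∀ v w, G.Adj v w ↔ G.Adj (σ v) (τ w) := by
      intro v w
      constructor
      · intro h
        have hB : (bipartiteDouble G).Adj (v, false) (w, true) := ⟨by simp, h⟩
        have := e.map_rel_iff.mpr hB
        exact this.2
      · intro h
        have hB : (bipartiteDouble G).Adj (e (v, false)) (e (w, true)) := by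
          refine ⟨?_, h⟩
          rw [h0 v, h1 w]
          cases ε <;> simp
        exact (e.map_rel_iff.mp hB).2
    -- σ bijective
    have hσinj : Function.Injective σ := by
      intro v v' h
      have : e (v, false) = e (v', false) := by rw [he0 v, he0 v', h]
      have := e.injective this
      exact congrArg Prod.fst this
    have hσsurj : Function.Surjective σ := by
      intro u
      set x := e.symm (u, ε) with hx
      have hex : e x = (u, ε) := e.apply_symm_apply _
      cases hx2 : x.2 with
      | false =>
        refine ⟨x.1, ?_⟩
        have : e (x.1, false) = (u, ε) := by
          rw [← hex, ← hx2]
        exact congrArg Prod.fst this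
      | true =>
        exfalso
        have heq : e (x.1, true) = (u, ε) := by
          rw [← hex, ← hx2]
        have h2 : (!ε : Bool) = ε := by rw [← h1 x.1, heq]
        exact Bool.not_ne_self ε h2
    -- τ = σ
    have hτσ : ∀ w, τ w = σ w := by
      intro w
      refine (hvd (σ w) (τ w) ?_).symm
      ext u
      obtain ⟨v, rfl⟩ := hσsurj u
      simp only [mem_neighborSet]
      rw [G.adj_comm (σ w) (σ v), G.adj_comm (τ w) (σ v)]
      rw [← hσadj v w, hcross v w]
    -- build the graph automorphism
    let σiso : G ≃g G :=
      { toEquiv := Equiv.ofBijective σ ⟨hσinj, hσsurj⟩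
        map_rel_iff' := fun {v w} => (hσadj v w).symm }
    refine ⟨(σiso, Multiplicative.ofAdd (if ε then 1 else 0)), ?_⟩
    have hbε : bOf (Multiplicative.ofAdd (if ε then (1 : ZMod 2) else 0)) = ε := by
      cases ε <;> decide
    ext x
    · show ((Φ _) x).1 = (e x).1
      rw [Φapp]
      obtain ⟨v, a⟩ := x
      cases a
      · rw [he0 v]; rfl
      · rw [he1 v, hτσ v]; rfl
    · show (((Φ _) x).2 : Bool) = (e x).2
      rw [Φapp]
      obtain ⟨v, a⟩ := x
      cases a
      · rw [he0 v]
        simp [hbε]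
      · rw [he1 v]
        simp [hbε]
  exact ⟨(MulEquiv.ofBijective (MonoidHom.mk' Φ hmul) ⟨hinj, hsurj⟩).symm⟩
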